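/- Let N ≥ 1 and ρ > 0. For each i = 1,…,N let X_i ⊆ ℝ^{n_i} be a convex set, f_i : ℝ^{n_i} → ℝ a convex function, Ē_i a real n_i × p matrix, and λ_i ∈ ℝ^{n_i}. Suppose (x₁*,…,x_N*, z*) satisfies the ADMM fixed-point conditions: (i) for each i, x_i* ∈ X_i minimizes x ↦ f_i(x) + ⟨λ_i, x − Ē_i z*⟩ + (ρ/2)‖x − Ē_i z*‖₂² over X_i; (ii) z* minimizes z ↦ Σ_i ( ⟨λ_i, x_i* − Ē_i z⟩ + (ρ/2)‖x_i* − Ē_i z‖₂² ) over ℝ^p; and (iii) x_i* = Ē_i z* for all i (consistency). Then (x₁*,…,x_N*) is optimal for the consensus problem: for every z ∈ ℝ^p with Ē_i z ∈ X_i for all i, one has Σ_{i=1}^N f_i(x_i*) ≤ Σ_{i=1}^N f_i(Ē_i z). -/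
import Mathlib


open Matrix Finset

theorem key_ineq (a b c : ℝ) (hc : 0 ≤ c)
    (h : ∀ t : ℝ, 0 < t → t ≤ 1 → a ≤ b + t * c) : a ≤ b := by
  refine le_of_forall_pos_le_add ?_
  intro ε hε
  set t := min 1 (ε / (c + 1)) with ht
  have ht0 : 0 < t := lt_min one_pos (div_pos hε (by linarith))
  have ht1 : t ≤ 1 := min_le_left _ _
  have htc : t * c ≤ ε := by
    have h1 : t ≤ ε / (c + 1) := min_le_right _ _
    have : t * c ≤ (ε / (c + 1)) * c := by nlinarith
    have h2 : (ε / (c + 1)) * c ≤ ε := by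
      rw [div_mul_eq_mul_div, div_le_iff₀ (by linarith)]
      nlinarith
    linarith
  have := h t ht0 ht1
  linarith

/-- A fixed point of the ADMM iteration for the general-form global consensus
problem is a global minimizer of the consensus problem. -/
theorem admm_fixed_point_is_consensus_optimal
    (N p : ℕ) (hN : 1 ≤ N) (ρ : ℝ) (hρ : 0 < ρ) (n : Fin N → ℕ)
    (X : ∀ i, Set (Fin (n i) → ℝ)) (hXconv : ∀ i, Convex ℝ (X i))
    (f : ∀ i, (Fin (n i) → ℝ) → ℝ)
    (hfconv : ∀ i, ConvexOn ℝ Set.univ (f i))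
    (E : ∀ i, Matrix (Fin (n i)) (Fin p) ℝ)
    (lam : ∀ i, Fin (n i) → ℝ)
    (xstar : ∀ i, Fin (n i) → ℝ) (zstar : Fin p → ℝ)
    -- (i) each `xᵢ*` minimizes the local augmented Lagrangian over `Xᵢ`
    (hxmem : ∀ i, xstar i ∈ X i)
    (hxmin : ∀ i, ∀ x ∈ X i,
      f i (xstar i) + lam i ⬝ᵥ (xstar i - E i *ᵥ zstar)
          + ρ / 2 * ∑ j, (xstar i j - (E i *ᵥ zstar) j) ^ 2 ≤
        f i x + lam i ⬝ᵥ (x - E i *ᵥ zstar)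
          + ρ / 2 * ∑ j, (x j - (E i *ᵥ zstar) j) ^ 2)
    -- (ii) `z*` minimizes the z-part of the augmented Lagrangian over `ℝᵖ`
    (hzmin : ∀ z : Fin p → ℝ,
      ∑ i, (lam i ⬝ᵥ (xstar i - E i *ᵥ zstar)
          + ρ / 2 * ∑ j, (xstar i j - (E i *ᵥ zstar) j) ^ 2) ≤
        ∑ i, (lam i ⬝ᵥ (xstar i - E i *ᵥ z)
          + ρ / 2 * ∑ j, (xstar i j - (E i *ᵥ z) j) ^ 2))
    -- (iii) consistency
    (hcons : ∀ i, xstar i = E i *ᵥ zstar) :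
    ∀ z : Fin p → ℝ, (∀ i, E i *ᵥ z ∈ X i) →
      ∑ i, f i (xstar i) ≤ ∑ i, f i (E i *ᵥ z) := by
  intro z hz
  -- Step 1: linearized local optimality
  have hlin : ∀ i, f i (xstar i) ≤
      f i (E i *ᵥ z) + lam i ⬝ᵥ (E i *ᵥ z - xstar i) := by
    intro i
    set x := E i *ᵥ z with hx
    refine key_ineq _ _ (ρ / 2 * ∑ j, (x j - xstar i j) ^ 2)
      (by positivity) ?_
    intro t ht0 ht1
    set xt := (1 - t) • xstar i + t • x with hxt
    have hxtX : xt ∈ X i :=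
      hXconv i (hxmem i) (hz i) (by linarith) (le_of_lt ht0) (by ring)
    have hconvf : f i xt ≤ (1 - t) * f i (xstar i) + t * f i x :=
      (hfconv i).2 (Set.mem_univ _) (Set.mem_univ _) (by linarith)
        (le_of_lt ht0) (by ring)
    have h1 := hxmin i xt hxtX
    rw [← hcons i] at h1
    have hdiff : xt - xstar i = t • (x - xstar i) := by
      rw [hxt]; ext j; simp; ring
    have hdot : lam i ⬝ᵥ (xt - xstar i) = t * (lam i ⬝ᵥ (x - xstar i)) := by
      rw [hdiff, dotProduct_smul]; rfl
    have hsq : ∑ j, (xt j - xstar i j) ^ 2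
        = t ^ 2 * ∑ j, (x j - xstar i j) ^ 2 := by
      rw [Finset.mul_sum]
      refine Finset.sum_congr rfl fun j _ => ?_
      have : xt j - xstar i j = t * (x j - xstar i j) := by
        rw [hxt]; simp; ring
      rw [this]; ring
    have hz0 : (∑ j : Fin (n i), (xstar i j - xstar i j) ^ 2) = 0 := by simp
    rw [hdot, hsq, hz0, sub_self, dotProduct_zero, mul_zero, add_zero,
      add_zero] at h1
    have key : t * f i (xstar i)
        ≤ t * (f i x + lam i ⬝ᵥ (x - xstar i)
            + t * (ρ / 2 * ∑ j, (x j - xstar i j) ^ 2)) := by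
      nlinarith [h1, hconvf]
    exact le_of_mul_le_mul_left key ht0
  -- Step 2: nonnegativity of the dual linear term
  have hL : 0 ≤ ∑ i, lam i ⬝ᵥ (E i *ᵥ (zstar - z)) := by
    set w := zstar - z with hw
    refine key_ineq _ _ (ρ / 2 * ∑ i, ∑ j, ((E i *ᵥ w) j) ^ 2)
      (by positivity) ?_
    intro t ht0 ht1
    have h2 := hzmin (zstar - t • w)
    have hLHS : ∑ i, (lam i ⬝ᵥ (xstar i - E i *ᵥ zstar)
        + ρ / 2 * ∑ j, (xstar i j - (E i *ᵥ zstar) j) ^ 2) = 0 := by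
      refine Finset.sum_eq_zero fun i _ => ?_
      rw [hcons i]; simp
    have hRHS : ∑ i, (lam i ⬝ᵥ (xstar i - E i *ᵥ (zstar - t • w))
          + ρ / 2 * ∑ j, (xstar i j - (E i *ᵥ (zstar - t • w)) j) ^ 2)
        = t * (∑ i, lam i ⬝ᵥ (E i *ᵥ w))
          + ρ / 2 * (t ^ 2 * ∑ i, ∑ j, ((E i *ᵥ w) j) ^ 2) := by
      have hper : ∀ i, lam i ⬝ᵥ (xstar i - E i *ᵥ (zstar - t • w))
            + ρ / 2 * ∑ j, (xstar i j - (E i *ᵥ (zstar - t • w)) j) ^ 2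
          = t * (lam i ⬝ᵥ (E i *ᵥ w))
            + ρ / 2 * (t ^ 2 * ∑ j, ((E i *ᵥ w) j) ^ 2) := by
        intro i
        have hv : xstar i - E i *ᵥ (zstar - t • w) = t • (E i *ᵥ w) := by
          rw [hcons i, mulVec_sub, mulVec_smul, sub_sub_cancel]
        have hvj : ∀ j, xstar i j - (E i *ᵥ (zstar - t • w)) j
            = t * (E i *ᵥ w) j := fun j => by
          have := congrFun hv j; simpa using this
        rw [hv, dotProduct_smul, smul_eq_mul]
        congr 1
        have : ∑ j, (xstar i j - (E i *ᵥ (zstar - t • w)) j) ^ 2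
            = t ^ 2 * ∑ j, ((E i *ᵥ w) j) ^ 2 := by
          rw [Finset.mul_sum]
          exact Finset.sum_congr rfl fun j _ => by rw [hvj j]; ring
        rw [this]
      rw [Finset.sum_congr rfl fun i _ => hper i, Finset.sum_add_distrib,
        ← Finset.mul_sum]
      congr 1
      rw [← Finset.mul_sum, ← Finset.mul_sum]
    rw [hLHS, hRHS] at h2
    have key : t * 0 ≤ t * (∑ i, lam i ⬝ᵥ (E i *ᵥ w)
        + t * (ρ / 2 * ∑ i, ∑ j, ((E i *ᵥ w) j) ^ 2)) := by
      nlinarith [h2]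
    simpa using le_of_mul_le_mul_left key ht0
  -- Combine
  have hsum : ∑ i, f i (xstar i) ≤
      ∑ i, (f i (E i *ᵥ z) + lam i ⬝ᵥ (E i *ᵥ z - xstar i)) :=
    Finset.sum_le_sum fun i _ => hlin i
  rw [Finset.sum_add_distrib] at hsum
  have hEq : ∑ i, lam i ⬝ᵥ (E i *ᵥ z - xstar i)
      = -∑ i, lam i ⬝ᵥ (E i *ᵥ (zstar - z)) := by
    rw [← Finset.sum_neg_distrib]
    refine Finset.sum_congr rfl fun i _ => ?_
    rw [hcons i, mulVec_sub, ← dotProduct_neg]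
    congr 1
    ext j; simp
  rw [hEq] at hsum
  linarith
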